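/- Let C = MDS(n,d) ≤ G^n be an additive MDS code of minimum distance d over a finite abelian group G of order q. Then for every s with d ≤ s ≤ n, the number of codewords of C of Hamming weight s equals C(n,s)·(q−1)·∑_{i=0}^{s−d} (−1)^i C(s−1,i) q^{s−d−i}. -/

import Mathlib

open Finset

lemma mds_paux (s : ℕ) (hs : 1 ≤ s) (m : ℕ) :
    ∑ i ∈ range (m+1), (-1:ℤ)^i * (s.choose i : ℤ) = (-1)^m * ((s-1).choose m : ℤ) := by
  induction m with
  | zero => simp
  | succ m ih =>
    rw [Finset.sum_range_succ, ih]
    obtain ⟨s, rfl⟩ : ∃ t, s = t + 1 := ⟨s - 1, by omega⟩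
    have : (s + 1).choose (m + 1) = s.choose m + s.choose (m+1) := Nat.choose_succ_succ s m
    simp only [Nat.add_sub_cancel, this]
    push_cast
    ring

lemma mds_alg (q : ℤ) {d s : ℕ} (hd : 1 ≤ d) (hds : d ≤ s) :
    ∑ i ∈ range (s+1), (-1:ℤ)^i * (s.choose i : ℤ) * q^(s - i + 1 - d)
      = (q - 1) * ∑ i ∈ range (s - d + 1), (-1:ℤ)^i * ((s-1).choose i : ℤ) * q^(s - d - i) := by
  set t := s - d with ht
  set R : ℤ := ∑ i ∈ range (t + 1), (-1:ℤ)^i * ((s-1).choose i : ℤ) * q^(t - i) with hR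
  have hts : t + 2 ≤ s + 1 := by omega
  rw [range_eq_Ico, ← Finset.sum_Ico_consecutive _ (Nat.zero_le (t+2)) hts]
  have h2 : ∑ i ∈ Finset.Ico (t+2) (s+1), (-1:ℤ)^i * (s.choose i : ℤ) * q^(s - i + 1 - d)
      = ∑ i ∈ Finset.Ico (t+2) (s+1), (-1:ℤ)^i * (s.choose i : ℤ) := by
    apply Finset.sum_congr rfl
    intro i hi
    rw [Finset.mem_Ico] at hi
    have : s - i + 1 - d = 0 := by omega
    rw [this, pow_zero, mul_one]
  rw [h2]
  have htail : ∑ i ∈ Finset.Ico (t+2) (s+1), (-1:ℤ)^i * (s.choose i : ℤ)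
      = -((-1:ℤ)^(t+1) * ((s-1).choose (t+1) : ℤ)) := by
    have h0 : ∑ i ∈ range (s+1), (-1:ℤ)^i * (s.choose i : ℤ) = 0 := by
      have := Int.alternating_sum_range_choose_of_ne (show s ≠ 0 by omega)
      simpa using this
    rw [range_eq_Ico, ← Finset.sum_Ico_consecutive _ (Nat.zero_le (t+2)) hts,
      ← range_eq_Ico] at h0
    have := mds_paux s (by omega) (t+1)
    rw [this] at h0
    linarith
  have hexp : ∀ i ∈ range (t+2), (-1:ℤ)^i * (s.choose i : ℤ) * q^(s - i + 1 - d)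
      = (-1:ℤ)^i * (s.choose i : ℤ) * q^(t + 1 - i) := by
    intro i hi
    rw [mem_range] at hi
    congr 2
    omega
  have hpascal : ∀ i ∈ range (t+1),
      (-1:ℤ)^(i+1) * (s.choose (i+1) : ℤ) * q^(t + 1 - (i+1))
      = -((-1:ℤ)^i * ((s-1).choose i : ℤ) * q^(t - i))
        + (-1:ℤ)^(i+1) * ((s-1).choose (i+1) : ℤ) * q^(t + 1 - (i+1)) := by
    intro i hi
    have hch : s.choose (i+1) = (s-1).choose i + (s-1).choose (i+1) := by
      obtain ⟨u, rfl⟩ : ∃ u, s = u + 1 := ⟨s - 1, by omega⟩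
      simpa using Nat.choose_succ_succ u i
    rw [hch]
    have : t + 1 - (i + 1) = t - i := by omega
    rw [this]
    push_cast
    ring
  have hqR : ∑ i ∈ range (t+1), (-1:ℤ)^i * ((s-1).choose i : ℤ) * q^(t + 1 - i) = q * R := by
    rw [hR, Finset.mul_sum]
    apply Finset.sum_congr rfl
    intro i hi
    rw [mem_range] at hi
    have : t + 1 - i = (t - i) + 1 := by omega
    rw [this, pow_succ]
    ring
  have step1 : ∑ i ∈ range (t+2), (-1:ℤ)^i * (s.choose i:ℤ) * q^(t+1-i)
      = (∑ i ∈ range (t+1), (-1:ℤ)^(i+1) * (s.choose (i+1):ℤ) * q^(t+1-(i+1)))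
        + (-1:ℤ)^0 * (s.choose 0:ℤ) * q^(t+1-0) :=
    Finset.sum_range_succ' (fun i => (-1:ℤ)^i * (s.choose i:ℤ) * q^(t+1-i)) (t+1)
  have hfirst : ∑ i ∈ range (t+1), -((-1:ℤ)^i * ((s-1).choose i : ℤ) * q^(t - i)) = -R := by
    rw [hR, ← Finset.sum_neg_distrib]
  have step2 : ∑ i ∈ range (t+1), (-1:ℤ)^(i+1) * (s.choose (i+1):ℤ) * q^(t+1-(i+1))
      = (∑ i ∈ range (t+1), -((-1:ℤ)^i * ((s-1).choose i:ℤ) * q^(t-i)))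
        + ∑ i ∈ range (t+1), (-1:ℤ)^(i+1) * ((s-1).choose (i+1):ℤ) * q^(t+1-(i+1)) := by
    rw [← Finset.sum_add_distrib]; exact Finset.sum_congr rfl hpascal
  have step3 : (∑ i ∈ range (t+1), (-1:ℤ)^(i+1) * ((s-1).choose (i+1):ℤ) * q^(t+1-(i+1)))
        + (-1:ℤ)^0 * ((s-1).choose 0:ℤ) * q^(t+1-0)
      = ∑ i ∈ range (t+2), (-1:ℤ)^i * ((s-1).choose i:ℤ) * q^(t+1-i) :=
    (Finset.sum_range_succ' (fun i => (-1:ℤ)^i * ((s-1).choose i:ℤ) * q^(t+1-i)) (t+1)).symm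
  have step4 : ∑ i ∈ range (t+2), (-1:ℤ)^i * ((s-1).choose i:ℤ) * q^(t+1-i)
      = q * R + (-1:ℤ)^(t+1) * ((s-1).choose (t+1):ℤ) := by
    rw [Finset.sum_range_succ, hqR]
    simp
  have hc0 : (-1:ℤ)^0 * (s.choose 0:ℤ) * q^(t+1-0)
      = (-1:ℤ)^0 * ((s-1).choose 0:ℤ) * q^(t+1-0) := by simp
  have hmain : ∑ i ∈ Finset.Ico 0 (t+2), (-1:ℤ)^i * (s.choose i : ℤ) * q^(s - i + 1 - d)
      = (q - 1) * R + (-1:ℤ)^(t+1) * ((s-1).choose (t+1) : ℤ) := by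
    rw [← range_eq_Ico, Finset.sum_congr rfl hexp]
    linarith [step1, step2, step3, step4, hfirst, hc0]
  rw [hmain, htail, hR]
  ring

lemma mds_proj_surj {G : Type*} [AddCommGroup G] [Fintype G] [DecidableEq G]
    {n d : ℕ} {C : AddSubgroup (Fin n → G)}
    (hcard : Nat.card C = Fintype.card G ^ (n + 1 - d))
    (hlb : ∀ c ∈ C, c ≠ 0 → d ≤ hammingNorm c)
    (hd1 : 1 ≤ d) (hdn : d ≤ n + 1)
    (U : Finset (Fin n)) (hU : U.card ≤ n + 1 - d) :
    ∀ f : Fin n → G, ∃ c ∈ C, ∀ i ∈ U, c i = f i := by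
  classical
  obtain ⟨V, hUV, hV⟩ := Finset.exists_superset_card_eq hU
      (by simpa using (show n + 1 - d ≤ n by omega))
  intro f
  set F : C → (↥V → G) := fun c i => c.1 i.1 with hF
  have hinj : Function.Injective F := by
    intro c₁ c₂ h
    have hmem : c₁.1 - c₂.1 ∈ C := sub_mem c₁.2 c₂.2
    by_contra hne
    have hne' : c₁.1 - c₂.1 ≠ 0 := by
      intro h0
      exact hne (Subtype.ext (sub_eq_zero.mp h0))
    have hd := hlb _ hmem hne'
    have hsub : ({i | (c₁.1 - c₂.1) i ≠ 0} : Finset (Fin n)) ⊆ Vᶜ := by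
      intro i hi
      simp only [Finset.mem_filter, Finset.mem_univ, true_and] at hi
      rw [Finset.mem_compl]
      intro hiV
      apply hi
      have := congrFun h ⟨i, hiV⟩
      simpa [hF, sub_eq_zero] using this
    have hcard' : hammingNorm (c₁.1 - c₂.1) ≤ n - V.card := by
      have := Finset.card_le_card hsub
      rwa [Finset.card_compl, Fintype.card_fin] at this
    rw [hV] at hcard'
    unfold hammingNorm at hd hcard'
    omega
  have hcards : Fintype.card C = Fintype.card (↥V → G) := by
    rw [← Nat.card_eq_fintype_card, hcard, Fintype.card_fun, Fintype.card_coe, hV]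
  have hbij : Function.Bijective F :=
    (Fintype.bijective_iff_injective_and_card F).mpr ⟨hinj, hcards⟩
  obtain ⟨c, hc⟩ := hbij.2 (fun i => f i.1)
  refine ⟨c.1, c.2, fun i hi => ?_⟩
  have := congrFun hc ⟨i, hUV hi⟩
  simpa [hF] using this

lemma mds_ncount {G : Type*} [AddCommGroup G] [Fintype G] [DecidableEq G] [Nontrivial G]
    {n d : ℕ} {C : AddSubgroup (Fin n → G)}
    (hcard : Nat.card C = Fintype.card G ^ (n + 1 - d))
    (hlb : ∀ c ∈ C, c ≠ 0 → d ≤ hammingNorm c)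
    (hd1 : 1 ≤ d) (hdn : d ≤ n + 1)
    (T : Finset (Fin n)) [DecidablePred (· ∈ C)] :
    (Finset.univ.filter (fun c : Fin n → G => c ∈ C ∧ ∀ i ∉ T, c i = 0)).card
      = (Fintype.card G) ^ (T.card + 1 - d) := by
  classical
  by_cases hTd : T.card + 1 ≤ d
  · have : (Finset.univ.filter (fun c : Fin n → G => c ∈ C ∧ ∀ i ∉ T, c i = 0)) = {0} := by
      ext c
      simp only [Finset.mem_filter, Finset.mem_univ, true_and, Finset.mem_singleton]
      constructor
      · rintro ⟨hcC, hcT⟩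
        by_contra hne
        have hd := hlb c hcC hne
        have hsub : ({i | c i ≠ 0} : Finset (Fin n)) ⊆ T := by
          intro i hi
          simp only [Finset.mem_filter, Finset.mem_univ, true_and] at hi
          by_contra hiT
          exact hi (hcT i hiT)
        have := Finset.card_le_card hsub
        unfold hammingNorm at hd
        omega
      · rintro rfl
        exact ⟨zero_mem C, fun i _ => rfl⟩
    rw [this]
    have : T.card + 1 - d = 0 := by omega
    simp [this]
  · push_neg at hTd
    set q := Fintype.card G with hq
    have hq1 : 1 < q := Fintype.one_lt_card
    have hTn : T.card ≤ n := by
      simpa using Finset.card_le_card (Finset.subset_univ T)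
    set φ : C →+ (↥(Tᶜ) → G) :=
      { toFun := fun c i => c.1 i.1
        map_zero' := rfl
        map_add' := fun a b => rfl } with hφ
    have hsurj : Function.Surjective φ := by
      intro g
      obtain ⟨c, hcC, hc⟩ := mds_proj_surj hcard hlb hd1 hdn Tᶜ
        (by rw [Finset.card_compl, Fintype.card_fin]; omega)
        (fun i => if h : i ∈ Tᶜ then g ⟨i, h⟩ else 0)
      refine ⟨⟨c, hcC⟩, ?_⟩
      funext i
      have := hc i.1 i.2
      simpa [hφ, dif_pos i.2] using this
    have hker : Nat.card (φ.ker) = q ^ (T.card + 1 - d) := by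
      have h1 : Nat.card C = Nat.card (C ⧸ φ.ker) * Nat.card φ.ker :=
        AddSubgroup.card_eq_card_quotient_mul_card_addSubgroup φ.ker
      have h2 : Nat.card (C ⧸ φ.ker) = q ^ (n - T.card) := by
        have e := (QuotientAddGroup.quotientKerEquivRange φ).toEquiv
        rw [Nat.card_congr e]
        have : φ.range = ⊤ := AddMonoidHom.range_eq_top_of_surjective φ hsurj
        rw [this]
        rw [Nat.card_congr (AddSubgroup.topEquiv.toEquiv)]
        simp [Nat.card_eq_fintype_card, Fintype.card_fun, Finset.card_compl]; rfl
      rw [hcard, h2] at h1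
      have hsplit : q ^ (n + 1 - d) = q ^ (n - T.card) * q ^ (T.card + 1 - d) := by
        rw [← pow_add]
        congr 1
        omega
      rw [hsplit] at h1
      exact (Nat.eq_of_mul_eq_mul_left (pow_pos (by omega : 0 < q) _) h1).symm
    have hequiv : φ.ker ≃ {c : Fin n → G // c ∈ C ∧ ∀ i ∉ T, c i = 0} :=
      { toFun := fun x => ⟨x.1.1, x.1.2, fun i hi => by
          have := congrFun (AddMonoidHom.mem_ker.mp x.2) ⟨i, Finset.mem_compl.mpr hi⟩
          simpa [hφ] using this⟩
        invFun := fun c => ⟨⟨c.1, c.2.1⟩, by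
          rw [AddMonoidHom.mem_ker]
          funext i
          exact c.2.2 i.1 (Finset.mem_compl.mp i.2)⟩
        left_inv := fun x => Subtype.ext (Subtype.ext rfl)
        right_inv := fun c => Subtype.ext rfl }
    rw [← Fintype.card_subtype, ← Nat.card_eq_fintype_card, ← Nat.card_congr hequiv, hker]

lemma mds_pointwise {n : ℕ} (T : Finset (Fin n)) {G : Type*} [AddCommGroup G] [DecidableEq G]
    {s : ℕ} (hT : T.card = s) (c : Fin n → G) (P : Prop) [Decidable P] :
    ∑ T' ∈ T.powerset, (-1:ℤ)^(s - T'.card) *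
        (if P ∧ (∀ i ∉ T', c i = 0) then 1 else 0)
      = if P ∧ Finset.univ.filter (fun i => c i ≠ 0) = T then 1 else 0 := by
  classical
  by_cases hcC : P
  swap
  · simp [hcC]
  simp only [hcC, true_and]
  have hsign : ∀ j, j ≤ s → (-1:ℤ)^(s-j) = (-1:ℤ)^s * (-1:ℤ)^j := by
    intro j hj
    have h1 : (-1:ℤ)^(s-j) = (-1:ℤ)^(s-j) * ((-1:ℤ)^2)^j := by norm_num
    rw [h1, ← pow_mul, ← pow_add, show s - j + 2*j = s + j by omega, pow_add]
  set A := Finset.univ.filter (fun i => c i ≠ 0) with hA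
  have hiff : ∀ T' : Finset (Fin n), (∀ i ∉ T', c i = 0) ↔ A ⊆ T' := by
    intro T'
    constructor
    · intro h i hi
      rw [hA, Finset.mem_filter] at hi
      by_contra hiT'
      exact hi.2 (h i hiT')
    · intro h i hi
      by_contra h0
      exact hi (h (by rw [hA]; simp [h0]))
  simp only [hiff, mul_ite, mul_one, mul_zero]
  rw [← Finset.sum_filter]
  by_cases hAT : A ⊆ T
  · have hbij : ∑ T' ∈ (T.powerset.filter (fun T' => A ⊆ T')), (-1:ℤ)^(s - T'.card)
        = ∑ U ∈ (T \ A).powerset, (-1:ℤ)^(s - (U.card + A.card)) := by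
      apply Finset.sum_nbij' (i := fun T' => T' \ A) (j := fun U => U ∪ A)
      · intro a ha
        simp only [Finset.mem_filter, Finset.mem_powerset] at ha
        exact Finset.mem_powerset.mpr (Finset.sdiff_subset_sdiff ha.1 Finset.Subset.rfl)
      · intro a ha
        simp only [Finset.mem_powerset] at ha
        simp only [Finset.mem_filter, Finset.mem_powerset]
        constructor
        · exact Finset.union_subset (ha.trans Finset.sdiff_subset) hAT
        · exact Finset.subset_union_right
      · intro a ha
        simp only [Finset.mem_filter, Finset.mem_powerset] at ha
        exact Finset.sdiff_union_of_subset ha.2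
      · intro a ha
        simp only [Finset.mem_powerset] at ha
        have hdisj : Disjoint a A := Finset.disjoint_of_subset_left ha Finset.sdiff_disjoint
        rw [Finset.union_sdiff_distrib, Finset.sdiff_self, Finset.union_empty,
          Finset.sdiff_eq_self_of_disjoint hdisj]
      · intro a ha
        simp only [Finset.mem_filter, Finset.mem_powerset] at ha
        congr 1
        have := Finset.card_sdiff_add_card_eq_card ha.2
        omega
    rw [hbij]
    have hcards : ∀ U ∈ (T \ A).powerset, (-1:ℤ)^(s - (U.card + A.card))
        = ((-1:ℤ)^s * (-1:ℤ)^A.card) * (-1:ℤ)^U.card := by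
      intro U hU
      rw [Finset.mem_powerset] at hU
      have h1 : U.card ≤ (T \ A).card := Finset.card_le_card hU
      have h2 : (T \ A).card = T.card - A.card := Finset.card_sdiff_of_subset hAT
      have h3 : A.card ≤ T.card := Finset.card_le_card hAT
      rw [hsign _ (by omega), pow_add]
      ring
    rw [Finset.sum_congr rfl hcards, ← Finset.mul_sum, Finset.sum_powerset_neg_one_pow_card]
    by_cases hAeq : A = T
    · subst hAeq
      rw [if_pos rfl, if_pos (Finset.sdiff_self A)]
      rw [hT, ← pow_add]
      simp [pow_mul, mul_one, ← two_mul]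
    · rw [if_neg hAeq, if_neg (by
        rw [Finset.sdiff_eq_empty_iff_subset]
        intro hTA
        exact hAeq (Finset.Subset.antisymm hAT hTA))]
      ring
  · rw [Finset.filter_eq_empty_iff.mpr, Finset.sum_empty, if_neg]
    · intro hAeq
      exact hAT (hAeq ▸ Finset.Subset.rfl)
    · intro T' hT'
      rw [Finset.mem_powerset] at hT'
      intro hAT'
      exact hAT (hAT'.trans hT')

/-- Let `C = MDS(n,d) ≤ Gⁿ` be an additive MDS code of minimum distance
`d` over a finite abelian group `G` of order `q` (so `|C| = q^(n+1-d)`).  For every `s`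
with `d ≤ s ≤ n`, the number of codewords of Hamming weight `s` is
`C(n,s)·(q-1)·∑_{i=0}^{s-d} (-1)^i C(s-1,i) q^(s-d-i)`. -/
theorem MDS_weight_distribution {G : Type*} [AddCommGroup G] [Fintype G] [DecidableEq G]
    [Nontrivial G] (n d : ℕ)
    (C : AddSubgroup (Fin n → G))
    (hcard : Nat.card C = Fintype.card G ^ (n + 1 - d))
    (hmin : IsLeast {w | ∃ c ∈ C, c ≠ 0 ∧ hammingNorm c = w} d) :
    ∀ s, d ≤ s → s ≤ n →
      (Nat.card {c : Fin n → G // c ∈ C ∧ hammingNorm c = s} : ℤ)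
        = (n.choose s : ℤ) * ((Fintype.card G : ℤ) - 1) *
          ∑ i ∈ Finset.range (s - d + 1),
            (-1 : ℤ) ^ i * ((s - 1).choose i : ℤ) * (Fintype.card G : ℤ) ^ (s - d - i) := by
  intro s hds hsn
  classical
  obtain ⟨⟨c₀, hc₀C, hc₀ne, hc₀w⟩, hlb'⟩ := hmin
  have hlb : ∀ c ∈ C, c ≠ 0 → d ≤ hammingNorm c := fun c hc hne => hlb' ⟨c, hc, hne, rfl⟩
  have hd1 : 1 ≤ d := by
    rcases Nat.eq_zero_or_pos d with h | h
    · exfalso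
      apply hc₀ne
      rw [← hammingNorm_eq_zero]
      omega
    · exact h
  have hdn : d ≤ n + 1 := by
    have : hammingNorm c₀ ≤ n := by
      unfold hammingNorm
      have := Finset.card_filter_le (univ : Finset (Fin n)) (fun i => c₀ i ≠ 0)
      simpa using this
    omega
  set q := Fintype.card G with hq
  -- Step 1 : `Nat.card` to a `Finset.card`
  have hstep1 : Nat.card {c : Fin n → G // c ∈ C ∧ hammingNorm c = s}
      = (univ.filter (fun c : Fin n → G => c ∈ C ∧ hammingNorm c = s)).card := by
    rw [Nat.card_eq_fintype_card, Fintype.card_subtype]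
  -- Step 2 : split by support
  have hfib : (univ.filter (fun c : Fin n → G => c ∈ C ∧ hammingNorm c = s)).card
      = ∑ T ∈ Finset.powersetCard s (univ : Finset (Fin n)),
          (univ.filter (fun c : Fin n → G =>
            c ∈ C ∧ univ.filter (fun i => c i ≠ 0) = T)).card := by
    rw [Finset.card_eq_sum_card_fiberwise
      (f := fun c : Fin n → G => univ.filter (fun i => c i ≠ 0))
      (t := Finset.powersetCard s univ)
      (fun c hc => by
        rw [Finset.mem_coe, Finset.mem_filter] at hc
        exact Finset.mem_coe.mpr (Finset.mem_powersetCard_univ.mpr hc.2.2))]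
    apply Finset.sum_congr rfl
    intro T hT
    rw [Finset.mem_powersetCard_univ] at hT
    congr 1
    ext c
    simp only [Finset.mem_filter, Finset.mem_univ, true_and]
    constructor
    · rintro ⟨⟨h1, h2⟩, h3⟩; exact ⟨h1, h3⟩
    · rintro ⟨h1, h3⟩
      refine ⟨⟨h1, ?_⟩, h3⟩
      show (univ.filter (fun i => c i ≠ 0)).card = s
      rw [h3, hT]
  -- card-as-sum expansion
  have expand : ∀ (p : (Fin n → G) → Prop) (inst : DecidablePred p),
      ((@Finset.filter _ p inst univ).card : ℤ)
        = ∑ c : Fin n → G, if p c then (1:ℤ) else 0 := by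
    intro p inst
    rw [Finset.card_filter]
    push_cast
    rfl
  -- Step 3 : inclusion–exclusion per support set
  have hT_eval : ∀ T ∈ Finset.powersetCard s (univ : Finset (Fin n)),
      ((univ.filter (fun c : Fin n → G =>
          c ∈ C ∧ univ.filter (fun i => c i ≠ 0) = T)).card : ℤ)
      = ∑ T' ∈ T.powerset, (-1:ℤ)^(s - T'.card) *
          ((univ.filter (fun c : Fin n → G => c ∈ C ∧ ∀ i ∉ T', c i = 0)).card : ℤ) := by
    intro T hT
    rw [Finset.mem_powersetCard_univ] at hT
    rw [expand _ _]
    have hrhs : ∑ T' ∈ T.powerset, (-1:ℤ)^(s - T'.card) *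
          ((univ.filter (fun c : Fin n → G => c ∈ C ∧ ∀ i ∉ T', c i = 0)).card : ℤ)
        = ∑ c : Fin n → G, ∑ T' ∈ T.powerset, (-1:ℤ)^(s - T'.card) *
            (if c ∈ C ∧ (∀ i ∉ T', c i = 0) then (1:ℤ) else 0) := by
      rw [Finset.sum_comm]
      apply Finset.sum_congr rfl
      intro T' _
      rw [expand _ _, Finset.mul_sum]
    rw [hrhs]
    apply Finset.sum_congr rfl
    intro c _
    exact (mds_pointwise T hT c (c ∈ C)).symm
  -- Step 4 : the counts of codewords supported in `T'`
  have hNT : ∀ T' : Finset (Fin n),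
      ((univ.filter (fun c : Fin n → G => c ∈ C ∧ ∀ i ∉ T', c i = 0)).card : ℤ)
        = (q:ℤ) ^ (T'.card + 1 - d) := by
    intro T'
    rw [mds_ncount hcard hlb hd1 hdn T']
    push_cast
    rfl
  -- Step 5 : the inner sum depends only on the cardinality
  have hinner : ∀ T ∈ Finset.powersetCard s (univ : Finset (Fin n)),
      (∑ T' ∈ T.powerset, (-1:ℤ)^(s - T'.card) * (q:ℤ)^(T'.card + 1 - d))
        = ∑ m ∈ range (s+1), (s.choose m : ℤ) * ((-1:ℤ)^(s-m) * (q:ℤ)^(m+1-d)) := by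
    intro T hT
    rw [Finset.mem_powersetCard_univ] at hT
    have h2 : (∑ T' ∈ T.powerset, (-1:ℤ)^(s - T'.card) * (q:ℤ)^(T'.card + 1 - d))
        = ∑ m ∈ range (T.card+1),
            T.card.choose m • ((-1:ℤ)^(s-m) * (q:ℤ)^(m+1-d)) :=
      Finset.sum_powerset_apply_card (fun m => (-1:ℤ)^(s-m) * (q:ℤ)^(m+1-d))
    rw [h2, hT]
    apply Finset.sum_congr rfl
    intro m _
    rw [nsmul_eq_mul]
  -- Step 6 : reflection of the sum
  have hrefl : ∑ m ∈ range (s+1), (s.choose m : ℤ) * ((-1:ℤ)^(s-m) * (q:ℤ)^(m+1-d))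
      = ∑ i ∈ range (s+1), (-1:ℤ)^i * (s.choose i : ℤ) * (q:ℤ)^(s - i + 1 - d) := by
    have base := Finset.sum_range_reflect
      (fun i => (-1:ℤ)^i * (s.choose i:ℤ) * (q:ℤ)^(s - i + 1 - d)) (s+1)
    have hterm : ∀ m ∈ range (s+1), (s.choose m : ℤ) * ((-1:ℤ)^(s-m) * (q:ℤ)^(m+1-d))
        = (-1:ℤ)^(s + 1 - 1 - m) * (s.choose (s + 1 - 1 - m) : ℤ)
            * (q:ℤ)^(s - (s + 1 - 1 - m) + 1 - d) := by
      intro m hm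
      rw [mem_range] at hm
      have hm' : m ≤ s := Nat.lt_succ_iff.mp hm
      have e1 : s + 1 - 1 - m = s - m := by rw [Nat.add_sub_cancel]
      have e2 : s - (s - m) = m := Nat.sub_sub_self hm'
      have e3 : s.choose (s - m) = s.choose m := Nat.choose_symm hm'
      rw [e1, e2, e3]
      ring
    exact (Finset.sum_congr rfl hterm).trans base
  -- Put everything together
  calc (Nat.card {c : Fin n → G // c ∈ C ∧ hammingNorm c = s} : ℤ)
      = ((univ.filter (fun c : Fin n → G => c ∈ C ∧ hammingNorm c = s)).card : ℤ) := by
        rw [hstep1]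
    _ = ∑ T ∈ Finset.powersetCard s (univ : Finset (Fin n)),
          ((univ.filter (fun c : Fin n → G =>
            c ∈ C ∧ univ.filter (fun i => c i ≠ 0) = T)).card : ℤ) := by
        rw [hfib]; push_cast; rfl
    _ = ∑ T ∈ Finset.powersetCard s (univ : Finset (Fin n)),
          ∑ T' ∈ T.powerset, (-1:ℤ)^(s - T'.card) *
            ((univ.filter (fun c : Fin n → G => c ∈ C ∧ ∀ i ∉ T', c i = 0)).card : ℤ) :=
        Finset.sum_congr rfl hT_eval
    _ = ∑ T ∈ Finset.powersetCard s (univ : Finset (Fin n)),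
          ∑ T' ∈ T.powerset, (-1:ℤ)^(s - T'.card) * (q:ℤ)^(T'.card + 1 - d) := by
        apply Finset.sum_congr rfl
        intro T _
        apply Finset.sum_congr rfl
        intro T' _
        rw [hNT]
    _ = ∑ T ∈ Finset.powersetCard s (univ : Finset (Fin n)),
          ∑ m ∈ range (s+1), (s.choose m : ℤ) * ((-1:ℤ)^(s-m) * (q:ℤ)^(m+1-d)) :=
        Finset.sum_congr rfl hinner
    _ = (n.choose s : ℤ) *
          ∑ m ∈ range (s+1), (s.choose m : ℤ) * ((-1:ℤ)^(s-m) * (q:ℤ)^(m+1-d)) := by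
        rw [Finset.sum_const, Finset.card_powersetCard, Finset.card_univ, Fintype.card_fin,
          nsmul_eq_mul]
    _ = (n.choose s : ℤ) *
          ∑ i ∈ range (s+1), (-1:ℤ)^i * (s.choose i : ℤ) * (q:ℤ)^(s - i + 1 - d) := by
        rw [hrefl]
    _ = (n.choose s : ℤ) * ((q:ℤ) - 1) *
          ∑ i ∈ Finset.range (s - d + 1),
            (-1 : ℤ) ^ i * ((s - 1).choose i : ℤ) * (q : ℤ) ^ (s - d - i) := by
        rw [mds_alg (q:ℤ) hd1 hds]
        ring
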